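/- Suppose G is a finite group generated by two elements a, b, the commutator subgroup G' = [G,G] is cyclic of square-free order, and G' is contained in the center Z(G). Then the order of [a,b] divides both the order of the image of a in G/G' and the index of ⟨aG'⟩ in G/G'. -/

import Mathlib

/-- If `G = ⟨a,b⟩` is finite, `G' = [G,G]` is cyclic of square-free order and central,
then the order of `[a,b]` divides both the order of the image of `a` in `G/G'` and
the index of `⟨aG'⟩` in `G/G'`. -/
theorem stmt_2 {G : Type*} [Group G] [Finite G] (a b : G)
    (hgen : Subgroup.closure ({a, b} : Set G) = ⊤)
    (hcyc : IsCyclic (commutator G))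
    (hsf : Squarefree (Nat.card (commutator G)))
    (hcent : commutator G ≤ Subgroup.center G) :
    orderOf (a⁻¹ * b⁻¹ * a * b) ∣ orderOf ((a : G ⧸ commutator G) : G ⧸ commutator G) ∧
    orderOf (a⁻¹ * b⁻¹ * a * b) ∣ (Subgroup.zpowers ((a : G ⧸ commutator G))).index := by
  set c := a⁻¹ * b⁻¹ * a * b with hc
  have hcmem : c ∈ commutator G := by
    open scoped commutatorElement in have h1 : c = ⁅a⁻¹, b⁻¹⁆ := by rw [hc]; group
    rw [h1, commutator_def]
    exact Subgroup.commutator_mem_commutator (Subgroup.mem_top _) (Subgroup.mem_top _)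
  have hcc : ∀ g : G, g * c = c * g := Subgroup.mem_center_iff.mp (hcent hcmem)
  have hca : ∀ g : G, Commute c g := fun g => (hcc g).symm
  -- conjugation of powers of a by b
  have keyA : ∀ k : ℕ, b⁻¹ * a ^ k * b = a ^ k * c ^ k := by
    intro k
    have h1 : b⁻¹ * a * b = a * c := by rw [hc]; group
    have h2 : b⁻¹ * a ^ k * b = (b⁻¹ * a * b) ^ k := by
      have := (conj_pow (i := k) (a := b⁻¹) (b := a))
      simpa using this.symm
    rw [h2, h1, ((hca a).symm.mul_pow k)]
  -- conjugation of powers of b by a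
  have keyB : ∀ k : ℕ, a⁻¹ * b ^ k * a = b ^ k * (c⁻¹) ^ k := by
    intro k
    have h1 : a⁻¹ * b * a = b * c⁻¹ := by rw [hc]; group
    have h2 : a⁻¹ * b ^ k * a = (a⁻¹ * b * a) ^ k := by
      have := (conj_pow (i := k) (a := a⁻¹) (b := b))
      simpa using this.symm
    rw [h2, h1, (((hca b).inv_left).symm.mul_pow k)]
  constructor
  · -- first divisibility
    set n := orderOf ((a : G ⧸ commutator G) : G ⧸ commutator G) with hn
    have han : a ^ n ∈ commutator G := by
      rw [← QuotientGroup.eq_one_iff, QuotientGroup.mk_pow]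
      exact pow_orderOf_eq_one _
    have hanc : b⁻¹ * a ^ n * b = a ^ n := by
      have := Subgroup.mem_center_iff.mp (hcent han) b
      rw [mul_assoc, ← this]
      group
    have : a ^ n * c ^ n = a ^ n * 1 := by
      rw [mul_one, ← keyA n, hanc]
    exact orderOf_dvd_of_pow_eq_one (mul_left_cancel this)
  · -- second divisibility
    letI : CommGroup (G ⧸ commutator G) := Abelianization.commGroup G
    set H := Subgroup.zpowers ((a : G ⧸ commutator G)) with hH
    set m := H.index with hm
    haveI : H.Normal := Subgroup.normal_of_comm H
    have hbm : ((b : G ⧸ commutator G)) ^ m ∈ H := by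
      have h1 : (((b : G ⧸ commutator G) : (G ⧸ commutator G) ⧸ H)) ^ m = 1 := by
        rw [hm, Subgroup.index]
        exact pow_card_eq_one'
      rwa [← QuotientGroup.mk_pow, QuotientGroup.eq_one_iff] at h1
    obtain ⟨k, hk⟩ := Subgroup.mem_zpowers_iff.mp hbm
    -- b ^ m * (a ^ k)⁻¹ ∈ commutator G
    have hz : b ^ m * (a ^ k)⁻¹ ∈ commutator G := by
      rw [← QuotientGroup.eq_one_iff]
      have : ((b ^ m * (a ^ k)⁻¹ : G) : G ⧸ commutator G)
          = ((b : G ⧸ commutator G)) ^ m * (((a : G ⧸ commutator G)) ^ k)⁻¹ := by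
        push_cast
        rfl
      rw [this, ← hk]
      group
    have hzc := Subgroup.mem_center_iff.mp (hcent hz)
    have hcomm : a⁻¹ * b ^ m * a = b ^ m := by
      calc a⁻¹ * b ^ m * a = (a⁻¹ * (b ^ m * (a ^ k)⁻¹)) * (a ^ k * a) := by group
        _ = ((b ^ m * (a ^ k)⁻¹) * a⁻¹) * (a ^ k * a) := by rw [hzc a⁻¹]
        _ = b ^ m := by group
    have : b ^ m * (c⁻¹) ^ m = b ^ m * 1 := by
      rw [mul_one, ← keyB m, hcomm]
    have hcm : c ^ m = 1 := by
      have h1 := mul_left_cancel this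
      rw [inv_pow] at h1
      rwa [← inv_inj, inv_one]
    exact orderOf_dvd_of_pow_eq_one hcm
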